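/- The group Γ is not bi-orderable: there is no linear order ≤ on Γ such that x ≤ y implies wxz ≤ wyz for all w, x, y, z ∈ Γ. -/

import Mathlib

namespace PinkGroup

mutual
  /-- forward action of the generator `a` -/
  def aF : List Bool → List Bool
    | [] => []
    | false :: w => true :: bF w
    | true :: w => false :: w
  /-- forward action of the generator `b` -/
  def bF : List Bool → List Bool
    | [] => []
    | false :: w => false :: aF w
    | true :: w => true :: w
end

mutual
  /-- inverse of `aF` -/
  def aIF : List Bool → List Bool
    | [] => []
    | true :: w => false :: bIF w
    | false :: w => true :: w
  /-- inverse of `bF` -/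
  def bIF : List Bool → List Bool
    | [] => []
    | false :: w => false :: aIF w
    | true :: w => true :: w
end

lemma inv_all (w : List Bool) :
    aF (aIF w) = w ∧ bF (bIF w) = w ∧ aIF (aF w) = w ∧ bIF (bF w) = w := by
  induction w with
  | nil => simp [aF, bF, aIF, bIF]
  | cons x w ih =>
    cases x <;>
      simp [aF, bF, aIF, bIF, ih.1, ih.2.1, ih.2.2.1, ih.2.2.2]

/-- The generator `a` of Pink's group: `(1w)^a = 2 w^b`, `(2w)^a = 1w`
(where the letter `1` is `false` and the letter `2` is `true`). -/
def a : Equiv.Perm (List Bool) :=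
  ⟨aF, aIF, fun w => (inv_all w).2.2.1, fun w => (inv_all w).1⟩

/-- The generator `b` of Pink's group: `(1w)^b = 1 w^a`, `(2w)^b = 2w`. -/
def b : Equiv.Perm (List Bool) :=
  ⟨bF, bIF, fun w => (inv_all w).2.2.2, fun w => (inv_all w).2.1⟩

/-- Pink's group `Γ`, the iterated monodromy group of `z^2 - 1`. -/
def Gam : Subgroup (Equiv.Perm (List Bool)) := Subgroup.closure {a, b}

lemma a_mem : a ∈ Gam := Subgroup.subset_closure (by simp)

lemma b_mem : b ∈ Gam := Subgroup.subset_closure (by simp)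

lemma E1 (w : List Bool) :
    bF (aF (bF (bF (aIF w)))) = aF (bF (bF (aIF (bF w)))) := by
  rcases w with _ | ⟨_ | _, w⟩ <;>
    simp [aF, bF, aIF, bIF, (inv_all _).1, (inv_all _).2.1, (inv_all _).2.2.1,
      (inv_all _).2.2.2]

lemma E0 (w : List Bool) :
    bF (bF (aIF (bF (aF w)))) = bF (aIF (bF (aF (bF w)))) := by
  rcases w with _ | ⟨_ | _, w⟩ <;>
    simp [aF, bF, aIF, bIF, (inv_all _).1, (inv_all _).2.1, (inv_all _).2.2.1,
      (inv_all _).2.2.2]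

lemma key (w : List Bool) :
    aF (aF (bF (aF (bIF (aF (aF (bF (aF (bIF w)))))))))
      = bF (aF (bIF (aF (aF (bF (aF (bIF (aF (aF w))))))))) := by
  rcases w with _ | ⟨_ | _, w⟩ <;>
    simp [aF, bF, aIF, bIF, E0, E1, (inv_all _).1, (inv_all _).2.1, (inv_all _).2.2.1,
      (inv_all _).2.2.2]

/-- The element `x = a² b a b⁻¹`. -/
def x : Equiv.Perm (List Bool) := a * a * b * a * b⁻¹

/-- The element `y = b a b⁻¹ a²`. -/
def y : Equiv.Perm (List Bool) := b * a * b⁻¹ * (a * a)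

lemma a_apply (w : List Bool) : a w = aF w := rfl
lemma b_apply (w : List Bool) : b w = bF w := rfl
lemma a_inv_apply (w : List Bool) : a⁻¹ w = aIF w := rfl
lemma b_inv_apply (w : List Bool) : b⁻¹ w = bIF w := rfl

lemma sq_eq : x * x = y * y := by
  apply Equiv.ext; intro w
  simp only [x, y, Equiv.Perm.mul_apply, a_apply, b_apply, b_inv_apply]
  exact key w

lemma x_ne_y : x ≠ y := by
  intro h
  have h3 := DFunLike.congr_fun h [false, false, false]
  simp only [x, y, Equiv.Perm.mul_apply, a_apply, b_apply, b_inv_apply,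
    aF, bF, aIF, bIF] at h3
  simp at h3

lemma x_mem : x ∈ Gam := by
  refine mul_mem (mul_mem (mul_mem (mul_mem a_mem a_mem) b_mem) a_mem) (inv_mem b_mem)

lemma y_mem : y ∈ Gam := by
  refine mul_mem (mul_mem (mul_mem b_mem a_mem) (inv_mem b_mem)) (mul_mem a_mem a_mem)

/-- The group `Γ` is not bi-orderable: there is no linear order on `Γ`
such that `x ≤ y` implies `w*x*z ≤ w*y*z` for all `w, z`. -/
theorem Gam_not_biorderable :
    ¬ ∃ le : ↥Gam → ↥Gam → Prop, IsLinearOrder ↥Gam le ∧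
      ∀ w x y z : ↥Gam, le x y → le (w * x * z) (w * y * z) := by
  rintro ⟨le, hlin, hmul⟩
  set X : ↥Gam := ⟨x, x_mem⟩ with hX
  set Y : ↥Gam := ⟨y, y_mem⟩ with hY
  have hne : X ≠ Y := fun h => x_ne_y (congrArg Subtype.val h)
  have hsq : X * X = Y * Y := by
    apply Subtype.ext
    exact sq_eq
  have main : ∀ U V : ↥Gam, U ≠ V → U * U = V * V → le U V → False := by
    intro U V hUV hsqUV hle
    have h1 : le (U * U) (U * V) := by
      have := hmul U U V 1 hle
      simpa using this
    have h2 : le (U * V) (V * V) := by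
      have := hmul 1 U V V hle
      simpa using this
    rw [← hsqUV] at h2
    have : U * U = U * V := hlin.toIsPartialOrder.toAntisymm.antisymm _ _ h1 h2
    exact hUV (mul_left_cancel this)
  rcases hlin.toTotal.total X Y with h | h
  · exact main X Y hne hsq h
  · exact main Y X hne.symm hsq.symm h

end PinkGroup
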